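/- Suppose H = (U, V, E_H) satisfies: for every partition of U into parts each of size at most ε·|U|, the fraction of vertices v ∈ V with more than one neighbor inside a single part is at most ε·D². If every labeling of G covers at most an ε²·D² fraction of the edges of G, then the composed instance G' has agreement soundness error 2ε·D²; that is, for every φ_A : A → Σ_A, the fraction of vertices (b, v) ∈ B × V on which the A-vertices of G' do not totally disagree is at most 2ε·D². -/

import Mathlib

open Finset

/-- soundness of the composition: if `H = (U,V,E_H)` has the
partition property (for every partition of `U` into parts of size at most
`ε|U|`, at most an `ε·D²` fraction of `v ∈ V` have more than one neighbor inside
a single part) and every labeling of `G` covers at most an `ε²·D²` fraction of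
its edges, then the composed instance `G'` has agreement soundness error
`2ε·D²`: for every `φ_A : A → Σ_A`, the fraction of vertices `(b,v) ∈ B × V` on
which the `A`-vertices do not totally disagree is at most `2ε·D²`.
`SA`/`SB` denote the alphabets `Σ_A`/`Σ_B`. -/
theorem stmt_2
    {A B SA SB U V : Type} [Fintype A] [Fintype B] [Fintype U] [Fintype V]
    [DecidableEq A] [DecidableEq U] [DecidableEq SB]
    (E : Finset (A × B)) (π : A → B → SA → SB)
    (Einv : B → U → A)
    (hinj : ∀ b, Function.Injective (Einv b))
    (hnbr : ∀ a b, (a, b) ∈ E ↔ ∃ u, Einv b u = a)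
    (EH : U → V → Bool)
    (D : ℕ) (hHdegV : ∀ v, (univ.filter (fun u => EH u v)).card = D)
    (ε : ℝ) (hε : 0 < ε)
    (hH : ∀ P : Finpartition (univ : Finset U),
      (∀ p ∈ P.parts, (p.card : ℝ) ≤ ε * Fintype.card U) →
      ((univ.filter (fun v : V =>
          ∃ p ∈ P.parts, 1 < (p.filter (fun u => EH u v)).card)).card : ℝ)
        ≤ ε * (D : ℝ) ^ 2 * Fintype.card V)
    (hsound : ∀ (φA : A → SA) (φB : B → SB),
      ((E.filter (fun e => π e.1 e.2 (φA e.1) = φB e.2)).card : ℝ)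
        ≤ ε ^ 2 * (D : ℝ) ^ 2 * E.card) :
    ∀ φA : A → SA,
      ((univ.filter (fun bv : B × V => ∃ a1 a2 : A, a1 ≠ a2 ∧
          (∃ u, Einv bv.1 u = a1 ∧ EH u bv.2) ∧
          (∃ u, Einv bv.1 u = a2 ∧ EH u bv.2) ∧
          π a1 bv.1 (φA a1) = π a2 bv.1 (φA a2))).card : ℝ)
        ≤ 2 * ε * (D : ℝ) ^ 2 * ((Fintype.card B : ℝ) * Fintype.card V) := by
  classical
  intro φA
  set badP : B × V → Prop := fun bv => ∃ a1 a2 : A, a1 ≠ a2 ∧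
      (∃ u, Einv bv.1 u = a1 ∧ EH u bv.2) ∧
      (∃ u, Einv bv.1 u = a2 ∧ EH u bv.2) ∧
      π a1 bv.1 (φA a1) = π a2 bv.1 (φA a2) with hbadP
  by_cases hne : (univ.filter badP).Nonempty
  · -- main case
    obtain ⟨⟨b0, v0⟩, hb0⟩ := hne
    rw [mem_filter] at hb0
    obtain ⟨-, a1', a2', -, ⟨u0, hu0, -⟩, -, -⟩ := hb0
    have hUpos : 0 < (Fintype.card U : ℝ) := by
      exact_mod_cast Fintype.card_pos_iff.mpr ⟨u0⟩
    set σ0 : SB := π a1' b0 (φA a1') with hσ0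
    set f : B → U → SB := fun b u => π (Einv b u) b (φA (Einv b u)) with hf
    set thr : ℝ := ε * Fintype.card U with hthr
    have hthrpos : 0 < thr := mul_pos hε hUpos
    set Big : Finset B := univ.filter
      (fun b => ∃ u : U, thr < ((univ.filter (fun u' => f b u' = f b u)).card : ℝ)) with hBigdef
    set φB : B → SB := fun b =>
      if h : ∃ u : U, thr < ((univ.filter (fun u' => f b u' = f b u)).card : ℝ)
      then f b h.choose else σ0 with hφB
    -- fiber of φB b
    set Fib : B → Finset U := fun b => univ.filter (fun u => f b u = φB b) with hFib
    have hFibBig : ∀ b ∈ Big, thr < ((Fib b).card : ℝ) := by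
      intro b hb
      rw [hBigdef, mem_filter] at hb
      obtain ⟨-, h⟩ := hb
      have hspec := h.choose_spec
      have : Fib b = univ.filter (fun u' => f b u' = f b h.choose) := by
        ext u'
        simp only [hFib, mem_filter, hφB, dif_pos h]
      rw [this]
      exact hspec
    -- covered edges
    set Cov : Finset (A × B) := E.filter (fun e => π e.1 e.2 (φA e.1) = φB e.2) with hCov
    have hsum_le : (∑ b ∈ Big, (Fib b).card) ≤ Cov.card := by
      have hsub : Big.biUnion (fun b => (Fib b).image (fun u => (Einv b u, b))) ⊆ Cov := by
        intro e he
        rw [mem_biUnion] at he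
        obtain ⟨b, hb, he⟩ := he
        rw [mem_image] at he
        obtain ⟨u, hu, rfl⟩ := he
        rw [hFib, mem_filter] at hu
        rw [hCov, mem_filter]
        exact ⟨(hnbr _ _).mpr ⟨u, rfl⟩, hu.2⟩
      calc (∑ b ∈ Big, (Fib b).card)
          = ∑ b ∈ Big, ((Fib b).image (fun u => (Einv b u, b))).card := by
            refine Finset.sum_congr rfl fun b _ => ?_
            rw [Finset.card_image_of_injective]
            intro x y hxy
            exact hinj b (congrArg Prod.fst hxy)
        _ = (Big.biUnion (fun b => (Fib b).image (fun u => (Einv b u, b)))).card := by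
            rw [Finset.card_biUnion]
            intro x hx y hy hxy
            rw [Function.onFun, Finset.disjoint_left]
            intro e h1 h2
            rw [mem_image] at h1 h2
            obtain ⟨u, -, hu⟩ := h1
            obtain ⟨u', -, hu'⟩ := h2
            exact hxy ((congrArg Prod.snd hu).trans (congrArg Prod.snd hu').symm)
        _ ≤ Cov.card := Finset.card_le_card hsub
    have hEcard : (E.card : ℝ) ≤ (Fintype.card B : ℝ) * Fintype.card U := by
      have hsub : E ⊆ (univ : Finset (B × U)).image (fun p => (Einv p.1 p.2, p.1)) := by
        intro e he
        obtain ⟨u, hu⟩ := (hnbr e.1 e.2).mp (by rwa [← Prod.mk.eta (p := e)] at he)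
        rw [mem_image]
        exact ⟨(e.2, u), mem_univ _, by simp [hu]⟩
      have := (Finset.card_le_card hsub).trans Finset.card_image_le
      rw [Finset.card_univ, Fintype.card_prod] at this
      exact_mod_cast this.trans (le_of_eq rfl)
    have hBigcard : (Big.card : ℝ) ≤ ε * (D : ℝ) ^ 2 * Fintype.card B := by
      have h1 : thr * Big.card ≤ (Cov.card : ℝ) := by
        calc thr * Big.card = ∑ _b ∈ Big, thr := by
              rw [Finset.sum_const, nsmul_eq_mul, mul_comm]
          _ ≤ ∑ b ∈ Big, ((Fib b).card : ℝ) :=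
              Finset.sum_le_sum fun b hb => (hFibBig b hb).le
          _ = ((∑ b ∈ Big, (Fib b).card : ℕ) : ℝ) := by push_cast; ring
          _ ≤ (Cov.card : ℝ) := by exact_mod_cast hsum_le
      have h2 : (Cov.card : ℝ) ≤ ε ^ 2 * (D : ℝ) ^ 2 * ((Fintype.card B : ℝ) * Fintype.card U) := by
        refine (hsound φA φB).trans ?_
        have : (0:ℝ) ≤ ε ^ 2 * (D : ℝ) ^ 2 := by positivity
        nlinarith [hEcard]
      have h3 : thr * Big.card ≤ thr * (ε * (D : ℝ) ^ 2 * Fintype.card B) := by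
        have h12 := h1.trans h2
        have heqr : thr * (ε * (D : ℝ) ^ 2 * Fintype.card B)
            = ε ^ 2 * (D : ℝ) ^ 2 * ((Fintype.card B : ℝ) * Fintype.card U) := by
          rw [hthr]; ring
        linarith [h12, heqr.ge, heqr.le]
      exact le_of_mul_le_mul_left h3 hthrpos
    -- per-b bad sets
    set badv : B → Finset V := fun b => univ.filter (fun v => badP (b, v)) with hbadv
    have hsplit : (univ.filter badP).card = ∑ b : B, (badv b).card := by
      have h := Finset.card_eq_sum_card_fiberwise
        (s := univ.filter badP) (t := (univ : Finset B)) (f := Prod.fst)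
        (fun x _ => mem_univ _)
      rw [h]
      refine Finset.sum_congr rfl fun b _ => ?_
      rw [hbadv]
      apply Finset.card_bij (fun x _ => x.2)
      · intro x hx
        simp only [mem_filter, mem_univ, true_and] at hx ⊢
        obtain ⟨h1, h2⟩ := hx
        rw [← h2, Prod.mk.eta]
        exact h1
      · rintro ⟨xb, xv⟩ hx ⟨yb, yv⟩ hy h
        simp only [mem_filter] at hx hy
        simp only at h
        simp [h, hx.2, hy.2]
      · intro v hv
        simp only [mem_filter, mem_univ, true_and] at hv
        exact ⟨(b, v), by simp [hv], rfl⟩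
    have hsmall : ∀ b ∈ univ \ Big, ((badv b).card : ℝ) ≤ ε * (D : ℝ) ^ 2 * Fintype.card V := by
      intro b hb
      rw [mem_sdiff, hBigdef, mem_filter, not_and] at hb
      have hball : ∀ u : U, ((univ.filter (fun u' => f b u' = f b u)).card : ℝ) ≤ thr := by
        intro u
        by_contra hc
        exact (hb.2 hb.1) ⟨u, not_le.mp hc⟩
      haveI : DecidableRel (Setoid.ker (f b)).r := fun u u' => decEq _ _
      set P : Finpartition (univ : Finset U) := Finpartition.ofSetoid (Setoid.ker (f b)) with hP
      have hpartschar : ∀ p ∈ P.parts, ∃ u : U, p = univ.filter (fun u' => f b u = f b u') := by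
        intro p hp
        obtain ⟨u, -, hu⟩ := P.part_surjOn hp
        refine ⟨u, ?_⟩
        rw [← hu]
        ext u'
        simp only [mem_filter, mem_univ, true_and]
        exact Finpartition.mem_part_ofSetoid_iff_rel
      have hsizes : ∀ p ∈ P.parts, (p.card : ℝ) ≤ ε * Fintype.card U := by
        intro p hp
        obtain ⟨u, rfl⟩ := hpartschar p hp
        have : (univ.filter (fun u' => f b u = f b u')) =
            (univ.filter (fun u' => f b u' = f b u)) := by
          ext u'; simp [eq_comm]
        rw [this]
        convert (hball u).trans (le_of_eq hthr)
        rfl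
      have hsubset : badv b ⊆ univ.filter (fun v : V =>
          ∃ p ∈ P.parts, 1 < (p.filter (fun u => EH u v)).card) := by
        intro v hv
        rw [hbadv, mem_filter] at hv
        obtain ⟨-, a1, a2, hne12, ⟨ua, hua, hEa⟩, ⟨ub, hub, hEb⟩, heq⟩ := hv
        rw [mem_filter]
        refine ⟨mem_univ _, P.part ua, P.part_mem.mpr (mem_univ _), ?_⟩
        have huab : ua ≠ ub := by
          intro h; exact hne12 (hua ▸ hub ▸ h ▸ rfl)
        have hmem1 : ua ∈ P.part ua := P.mem_part (mem_univ _)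
        have hmem2 : ub ∈ P.part ua := by
          rw [hP]
          rw [Finpartition.mem_part_ofSetoid_iff_rel]
          show f b ua = f b ub
          rw [hf]
          simp only [hua, hub]
          exact heq
        rw [Finset.one_lt_card]
        exact ⟨ua, mem_filter.mpr ⟨hmem1, hEa⟩, ub, mem_filter.mpr ⟨hmem2, hEb⟩, huab⟩
      calc ((badv b).card : ℝ) ≤ _ := Nat.cast_le.mpr (Finset.card_le_card hsubset)
        _ ≤ ε * (D : ℝ) ^ 2 * Fintype.card V := hH P hsizes
    -- now combine
    have hVbound : ∀ b : B, ((badv b).card : ℝ) ≤ Fintype.card V := by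
      intro b
      exact_mod_cast Finset.card_le_card (Finset.filter_subset _ _) |>.trans
        (le_of_eq (Finset.card_univ))
    rw [hsplit]
    push_cast
    rw [← Finset.sum_sdiff (Finset.subset_univ Big)]
    have t1 : (∑ b ∈ Big, ((badv b).card : ℝ)) ≤ ε * (D : ℝ) ^ 2 * Fintype.card B * Fintype.card V := by
      calc (∑ b ∈ Big, ((badv b).card : ℝ)) ≤ ∑ _b ∈ Big, (Fintype.card V : ℝ) :=
            Finset.sum_le_sum fun b _ => hVbound b
        _ = Big.card * Fintype.card V := by rw [Finset.sum_const, nsmul_eq_mul]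
        _ ≤ ε * (D : ℝ) ^ 2 * Fintype.card B * Fintype.card V := by
            have : (0:ℝ) ≤ (Fintype.card V : ℝ) := Nat.cast_nonneg _
            nlinarith [hBigcard]
    have t2 : (∑ b ∈ univ \ Big, ((badv b).card : ℝ))
        ≤ ε * (D : ℝ) ^ 2 * Fintype.card B * Fintype.card V := by
      calc (∑ b ∈ univ \ Big, ((badv b).card : ℝ))
          ≤ ∑ _b ∈ univ \ Big, ε * (D : ℝ) ^ 2 * Fintype.card V :=
            Finset.sum_le_sum hsmall
        _ = (univ \ Big).card * (ε * (D : ℝ) ^ 2 * Fintype.card V) := by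
            rw [Finset.sum_const, nsmul_eq_mul]
        _ ≤ Fintype.card B * (ε * (D : ℝ) ^ 2 * Fintype.card V) := by
            have h1 : ((univ \ Big).card : ℝ) ≤ Fintype.card B := by
              exact_mod_cast (Finset.card_le_card (Finset.subset_univ _)).trans
                (le_of_eq Finset.card_univ)
            have h2 : (0:ℝ) ≤ ε * (D : ℝ) ^ 2 * Fintype.card V := by positivity
            nlinarith
        _ = ε * (D : ℝ) ^ 2 * Fintype.card B * Fintype.card V := by ring
    have : (2:ℝ) * ε * (D : ℝ) ^ 2 * ((Fintype.card B : ℝ) * Fintype.card V)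
        = ε * (D : ℝ) ^ 2 * Fintype.card B * Fintype.card V
          + ε * (D : ℝ) ^ 2 * Fintype.card B * Fintype.card V := by ring
    rw [this]
    exact add_le_add t2 t1
  · rw [Finset.not_nonempty_iff_eq_empty] at hne
    rw [hne]
    simp only [Finset.card_empty, Nat.cast_zero]
    positivity
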